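/- Let f : ℝ → ℝ be continuous, α > 0 and β > 0, define A = a - α·(b-a)/2, B = b + α·(b-a)/2, and the white-box outer-inner loss L(a,b) = (β/α)·∫_A^B f(u) du - (1 + β/α)·∫_a^b f(u) du. Then ∂L/∂b = (β/α)·(f(B) - f(b)) + (β/2)·f(B) + (β/2)·f(A) - f(b). -/

import Mathlib

/-- white-box OIR loss
`L a b = (β/α) ∫_A^B f - (1 + β/α) ∫_a^b f` with `A = a - α(b-a)/2`, `B = b + α(b-a)/2`;
`∂L/∂b = (β/α)(f B - f b) + (β/2) f B + (β/2) f A - f b`. -/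
theorem oir_white_box_partial_b
    (f : ℝ → ℝ) (hf : Continuous f) (α β a b : ℝ) (hα : 0 < α) (hβ : 0 < β) :
    HasDerivAt
      (fun b' => β / α * (∫ u in (a - α * (b' - a) / 2)..(b' + α * (b' - a) / 2), f u)
        - (1 + β / α) * ∫ u in a..b', f u)
      (β / α * (f (b + α * (b - a) / 2) - f b)
        + β / 2 * f (b + α * (b - a) / 2) + β / 2 * f (a - α * (b - a) / 2) - f b) b := by
  set F : ℝ → ℝ := fun x => ∫ u in (0:ℝ)..x, f u with hFdef
  have hF : ∀ x : ℝ, HasDerivAt F (f x) x := fun x =>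
    intervalIntegral.integral_hasDerivAt_right (hf.intervalIntegrable 0 x)
      (hf.stronglyMeasurableAtFilter _ _) hf.continuousAt
  have hAB : ∀ p q : ℝ, (∫ u in p..q, f u) = F q - F p := by
    intro p q
    rw [hFdef]
    simp [intervalIntegral.integral_interval_sub_left (hf.intervalIntegrable 0 q)
      (hf.intervalIntegrable 0 p)]
  have hBmap : HasDerivAt (fun b' : ℝ => b' + α * (b' - a) / 2) (1 + α / 2) b := by
    have h2 := (((hasDerivAt_id b).sub_const a).const_mul α).div_const 2
    simpa [mul_one, Pi.add_def] using (hasDerivAt_id b).add h2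
  have hAmap : HasDerivAt (fun b' : ℝ => a - α * (b' - a) / 2) (-(α / 2)) b := by
    have h2 := (((hasDerivAt_id b).sub_const a).const_mul α).div_const 2
    simpa [mul_one, Pi.sub_def] using (hasDerivAt_const b a).sub h2
  have hFB : HasDerivAt (fun b' : ℝ => F (b' + α * (b' - a) / 2))
      (f (b + α * (b - a) / 2) * (1 + α / 2)) b :=
    (hF _).comp b hBmap
  have hFA : HasDerivAt (fun b' : ℝ => F (a - α * (b' - a) / 2))
      (f (a - α * (b - a) / 2) * (-(α / 2))) b :=
    (hF _).comp b hAmap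
  have hInner : HasDerivAt (fun b' : ℝ => ∫ u in a..b', f u) (f b) b :=
    intervalIntegral.integral_hasDerivAt_right (hf.intervalIntegrable a b)
      (hf.stronglyMeasurableAtFilter _ _) hf.continuousAt
  have key : HasDerivAt
      (fun b' => β / α * (F (b' + α * (b' - a) / 2) - F (a - α * (b' - a) / 2))
        - (1 + β / α) * ∫ u in a..b', f u)
      (β / α * (f (b + α * (b - a) / 2) * (1 + α / 2) - f (a - α * (b - a) / 2) * (-(α / 2)))
        - (1 + β / α) * f b) b :=
    ((hFB.sub hFA).const_mul (β / α)).sub (hInner.const_mul (1 + β / α))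
  have heq : (fun b' => β / α * (∫ u in (a - α * (b' - a) / 2)..(b' + α * (b' - a) / 2), f u)
        - (1 + β / α) * ∫ u in a..b', f u)
      = (fun b' => β / α * (F (b' + α * (b' - a) / 2) - F (a - α * (b' - a) / 2))
        - (1 + β / α) * ∫ u in a..b', f u) := funext fun b' => by rw [hAB]
  rw [heq]
  convert key using 1
  have hα' : α ≠ 0 := ne_of_gt hα
  field_simp
  ring
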